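/- arXiv:1804.04315 — 2 statements merged into one kernel-verified Lean document; each statement's English description precedes it below -/
import Mathlib

section
/- Let u : ℝⁿ → ℝ be bounded with sup u = 0, and let β > 0. Define f_β(x) = u(x) − β√(1+|x|²). Then f_β attains its maximum at some point x_β ∈ ℝⁿ, and as β → 0: f_β(x_β) → 0, β√(1+|x_β|²) → 0, and u(x_β) → 0. -/
theorem penalized_maximizers
    (n : ℕ) (u : (Fin n → ℝ) → ℝ)
    (hcont : Continuous u) (hbdd : ∃ M, ∀ x, |u x| ≤ M)
    (hsup : IsLUB (Set.range u) 0) :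
    (∀ β > (0:ℝ), ∃ x : Fin n → ℝ, ∀ y,
        u y - β * Real.sqrt (1 + ‖y‖ ^ 2) ≤ u x - β * Real.sqrt (1 + ‖x‖ ^ 2)) ∧
    (∀ xb : ℝ → (Fin n → ℝ),
      (∀ β ∈ Set.Ioi (0:ℝ), ∀ y,
          u y - β * Real.sqrt (1 + ‖y‖ ^ 2) ≤ u (xb β) - β * Real.sqrt (1 + ‖xb β‖ ^ 2)) →
      Filter.Tendsto (fun β => u (xb β) - β * Real.sqrt (1 + ‖xb β‖ ^ 2))
        (nhdsWithin 0 (Set.Ioi 0)) (nhds 0) ∧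
      Filter.Tendsto (fun β => β * Real.sqrt (1 + ‖xb β‖ ^ 2))
        (nhdsWithin 0 (Set.Ioi 0)) (nhds 0) ∧
      Filter.Tendsto (fun β => u (xb β)) (nhdsWithin 0 (Set.Ioi 0)) (nhds 0)) := by
  obtain ⟨M, hM⟩ := hbdd
  have hu0 : ∀ x, u x ≤ 0 := fun x => hsup.1 ⟨x, rfl⟩
  have hsq : ∀ x : Fin n → ℝ, ‖x‖ ≤ Real.sqrt (1 + ‖x‖ ^ 2) := by
    intro x
    calc ‖x‖ = Real.sqrt (‖x‖ ^ 2) := (Real.sqrt_sq (norm_nonneg x)).symm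
      _ ≤ _ := Real.sqrt_le_sqrt (by nlinarith)
  have h1sq : ∀ x : Fin n → ℝ, (1:ℝ) ≤ Real.sqrt (1 + ‖x‖ ^ 2) := by
    intro x
    have := Real.sqrt_le_sqrt (show (1:ℝ) ≤ 1 + ‖x‖ ^ 2 by nlinarith [sq_nonneg ‖x‖])
    simpa using this
  have hex : ∀ β > (0:ℝ), ∃ x : Fin n → ℝ, ∀ y,
      u y - β * Real.sqrt (1 + ‖y‖ ^ 2) ≤ u x - β * Real.sqrt (1 + ‖x‖ ^ 2) := by
    intro β hβ
    set f : (Fin n → ℝ) → ℝ := fun x => u x - β * Real.sqrt (1 + ‖x‖ ^ 2) with hf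
    have hcf : Continuous f :=
      hcont.sub (continuous_const.mul (Real.continuous_sqrt.comp (by continuity)))
    set R : ℝ := max ((M - u 0 + β) / β) 0 + 1 with hR
    have hR0 : (0:ℝ) ≤ R := by
      rw [hR]; positivity
    have h0mem : (0 : Fin n → ℝ) ∈ Metric.closedBall 0 R := by
      simp [hR0]
    obtain ⟨x, hx, hxmax⟩ := (isCompact_closedBall (0 : Fin n → ℝ) R).exists_isMaxOn
      ⟨0, h0mem⟩ hcf.continuousOn
    refine ⟨x, fun y => ?_⟩
    by_cases hy : ‖y‖ ≤ R
    · exact hxmax (mem_closedBall_zero_iff.2 hy)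
    · push_neg at hy
      have h1 : f y ≤ M - β * ‖y‖ := by
        have := (abs_le.1 (hM y)).2
        have := hsq y
        have : β * ‖y‖ ≤ β * Real.sqrt (1 + ‖y‖ ^ 2) :=
          mul_le_mul_of_nonneg_left (hsq y) hβ.le
        simp only [hf]; linarith [(abs_le.1 (hM y)).2]
      have h2 : M - β * ‖y‖ < u 0 - β := by
        have hdiv : (M - u 0 + β) / β < R := by
          have := le_max_left ((M - u 0 + β) / β) (0:ℝ); linarith
        have : M - u 0 + β < β * R := by
          rw [div_lt_iff₀ hβ] at hdiv; linarith [hdiv]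
        nlinarith [mul_lt_mul_of_pos_left hy hβ]
      have h3 : u 0 - β ≤ f 0 := by
        have : f 0 = u 0 - β := by simp [hf]
        linarith [this.ge]
      have h4 : f 0 ≤ f x := hxmax h0mem
      have := h1.trans_lt (h2.trans_le (h3.trans h4))
      simpa only [hf] using this.le
  refine ⟨hex, fun xb hxb => ?_⟩
  have hm0 : Filter.Tendsto (fun β => u (xb β) - β * Real.sqrt (1 + ‖xb β‖ ^ 2))
      (nhdsWithin 0 (Set.Ioi 0)) (nhds 0) := by
    rw [Metric.tendsto_nhdsWithin_nhds]
    intro ε hε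
    obtain ⟨y, hy⟩ : ∃ y, -(ε/2) < u y := by
      by_contra h
      push_neg at h
      have : (0:ℝ) ≤ -(ε/2) := hsup.2 (by rintro z ⟨w, rfl⟩; exact h w)
      linarith
    have hs : (0:ℝ) < Real.sqrt (1 + ‖y‖ ^ 2) := lt_of_lt_of_le one_pos (h1sq y)
    refine ⟨(ε/2) / Real.sqrt (1 + ‖y‖ ^ 2), by positivity, fun {β} hβ hd => ?_⟩
    have hβ' : (0:ℝ) < β := hβ
    rw [Real.dist_eq, sub_zero, abs_of_pos hβ'] at hd
    have hsmall : β * Real.sqrt (1 + ‖y‖ ^ 2) < ε/2 := by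
      have := mul_lt_mul_of_pos_right hd hs
      rwa [div_mul_cancel₀ _ hs.ne'] at this
    have hlow := hxb β hβ y
    have hup : u (xb β) - β * Real.sqrt (1 + ‖xb β‖ ^ 2) ≤ 0 := by
      have h1 := hu0 (xb β)
      have h2 : β * 1 ≤ β * Real.sqrt (1 + ‖xb β‖ ^ 2) :=
        mul_le_mul_of_nonneg_left (h1sq (xb β)) hβ'.le
      linarith
    rw [Real.dist_eq, sub_zero]
    refine abs_lt.2 ⟨?_, lt_of_le_of_lt hup hε⟩
    linarith
  have hg : Filter.Tendsto (fun β => β * Real.sqrt (1 + ‖xb β‖ ^ 2))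
      (nhdsWithin 0 (Set.Ioi 0)) (nhds 0) := by
    have hneg : Filter.Tendsto (fun β => -(u (xb β) - β * Real.sqrt (1 + ‖xb β‖ ^ 2)))
        (nhdsWithin 0 (Set.Ioi 0)) (nhds 0) := by
      simpa using hm0.neg
    refine tendsto_of_tendsto_of_tendsto_of_le_of_le'
      (tendsto_const_nhds (x := (0:ℝ))) hneg ?_ ?_
    · filter_upwards [self_mem_nhdsWithin] with β hβ
      have : (0:ℝ) < β := hβ
      positivity
    · filter_upwards with β
      have := hu0 (xb β)
      linarith
  refine ⟨hm0, hg, ?_⟩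
  have := hm0.add hg
  simpa using this
end

section
/- Let u : ℝⁿ × [0,T] → ℝ be bounded and uniformly continuous, and for C(t) = (L+1)t + K suppose σ := sup_{x,y∈ℝⁿ, t∈[0,T]} (u(x,t) − u(y,t) − C(t)|x−y|) > 0. For α, β > 0 define Φ(x,y,t,s) = u(x,t) − u(y,s) − C(t)|x−y| − |t−s|²/α² − β(|x|²+|y|²). Then Φ attains a maximum at some (x̄,ȳ,t̄,s̄) with Φ(x̄,ȳ,t̄,s̄) > σ/2 for all sufficiently small β (uniformly in α), |t̄−s̄| = O(α), β(|x̄|²+|ȳ|²) bounded, and for α small enough x̄ ≠ ȳ and t̄, s̄ > 0. -/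
/-- The doubled-variables penalized functional used in the spatial Lipschitz estimate. -/
noncomputable def Phi {n : ℕ} (u : (Fin n → ℝ) → ℝ → ℝ) (L K α β : ℝ)
    (x y : Fin n → ℝ) (t s : ℝ) : ℝ :=
  u x t - u y s - ((L + 1) * t + K) * ‖x - y‖ - |t - s| ^ 2 / α ^ 2
    - β * (‖x‖ ^ 2 + ‖y‖ ^ 2)

/-- Existence of a maximizer of `Phi` on a ball × ball × square. -/
lemma phi_exists_max {n : ℕ} (u : (Fin n → ℝ) → ℝ → ℝ) (L K α β T R : ℝ)
    (hT : 0 ≤ T) (hR : 0 ≤ R)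
    (hu : ContinuousOn (fun q : (Fin n → ℝ) × ℝ => u q.1 q.2)
      (Set.univ ×ˢ Set.Icc 0 T)) :
    ∃ xb yb : Fin n → ℝ, ∃ tb sb : ℝ,
      ‖xb‖ ≤ R ∧ ‖yb‖ ≤ R ∧ tb ∈ Set.Icc 0 T ∧ sb ∈ Set.Icc 0 T ∧
      ∀ x y : Fin n → ℝ, ∀ t s : ℝ, ‖x‖ ≤ R → ‖y‖ ≤ R →
        t ∈ Set.Icc 0 T → s ∈ Set.Icc 0 T →
        Phi u L K α β x y t s ≤ Phi u L K α β xb yb tb sb := by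
  set D : Set (((Fin n → ℝ) × (Fin n → ℝ)) × (ℝ × ℝ)) :=
    (Metric.closedBall 0 R ×ˢ Metric.closedBall 0 R) ×ˢ (Set.Icc 0 T ×ˢ Set.Icc 0 T)
    with hDdef
  have hDcomp : IsCompact D :=
    ((isCompact_closedBall _ _).prod (isCompact_closedBall _ _)).prod
      (isCompact_Icc.prod isCompact_Icc)
  have hDne : D.Nonempty := by
    refine ⟨((0, 0), (0, 0)), Set.mem_prod.mpr ⟨Set.mem_prod.mpr ⟨?_, ?_⟩,
      Set.mem_prod.mpr ⟨⟨le_refl 0, hT⟩, ⟨le_refl 0, hT⟩⟩⟩⟩ <;>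
      simpa [Metric.mem_closedBall] using hR
  have hcont : ContinuousOn
      (fun p : ((Fin n → ℝ) × (Fin n → ℝ)) × (ℝ × ℝ) =>
        Phi u L K α β p.1.1 p.1.2 p.2.1 p.2.2) D := by
    unfold Phi
    apply ContinuousOn.sub
    apply ContinuousOn.sub
    apply ContinuousOn.sub
    apply ContinuousOn.sub
    · exact hu.comp
        (Continuous.continuousOn (by fun_prop : Continuous
          (fun p : ((Fin n → ℝ) × (Fin n → ℝ)) × (ℝ × ℝ) => (p.1.1, p.2.1))))
        (fun p hp => ⟨trivial, hp.2.1⟩)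
    · exact hu.comp
        (Continuous.continuousOn (by fun_prop : Continuous
          (fun p : ((Fin n → ℝ) × (Fin n → ℝ)) × (ℝ × ℝ) => (p.1.2, p.2.2))))
        (fun p hp => ⟨trivial, hp.2.2⟩)
    · apply Continuous.continuousOn
      apply Continuous.mul
      · fun_prop
      · exact (continuous_fst.fst.sub continuous_fst.snd).norm
    · apply Continuous.continuousOn
      apply Continuous.div_const
      exact ((continuous_snd.fst.sub continuous_snd.snd).abs).pow 2
    · apply Continuous.continuousOn
      exact continuous_const.mul
        ((continuous_fst.fst.norm.pow 2).add (continuous_fst.snd.norm.pow 2))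
  obtain ⟨pb, hpbD, hpbmax⟩ := hDcomp.exists_isMaxOn hDne hcont
  have hmaxle : ∀ p ∈ D,
      Phi u L K α β p.1.1 p.1.2 p.2.1 p.2.2
        ≤ Phi u L K α β pb.1.1 pb.1.2 pb.2.1 pb.2.2 := hpbmax
  refine ⟨pb.1.1, pb.1.2, pb.2.1, pb.2.2, ?_, ?_, hpbD.2.1, hpbD.2.2, ?_⟩
  · have := hpbD.1.1
    rwa [Metric.mem_closedBall, dist_zero_right] at this
  · have := hpbD.1.2
    rwa [Metric.mem_closedBall, dist_zero_right] at this
  · intro x y t s hx hy ht hs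
    exact hmaxle ((x, y), (t, s)) (Set.mem_prod.mpr ⟨Set.mem_prod.mpr
      ⟨by rwa [Metric.mem_closedBall, dist_zero_right],
       by rwa [Metric.mem_closedBall, dist_zero_right]⟩,
      Set.mem_prod.mpr ⟨ht, hs⟩⟩)

/-- From `d² ≤ 2M·α²` deduce `d ≤ (2M+1)·α`. -/
lemma sq_bound_to_lin {d M α : ℝ} (hd : 0 ≤ d) (hM : 1 ≤ M) (hα : 0 < α)
    (h : d ^ 2 ≤ 2 * M * α ^ 2) : d ≤ (2 * M + 1) * α := by
  nlinarith [mul_pos hα hα, sq_nonneg (d - (2 * M + 1) * α), sq_nonneg (d + (2 * M + 1) * α)]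

set_option maxHeartbeats 2000000 in
theorem doubling_variables_lemma
    (n : ℕ) (T L K : ℝ) (hT : 0 < T) (hL : 0 < L) (hK : 0 < K)
    (u : (Fin n → ℝ) → ℝ → ℝ)
    (hbdd : ∃ M, ∀ x t, |u x t| ≤ M)
    (huc : UniformContinuousOn (fun p : (Fin n → ℝ) × ℝ => u p.1 p.2)
      (Set.univ ×ˢ Set.Icc 0 T))
    (hLip0 : LipschitzWith (Real.toNNReal K) fun x => u x 0)
    (σ : ℝ)
    (hσdef : σ = sSup {v | ∃ x y : Fin n → ℝ, ∃ t ∈ Set.Icc 0 T,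
        v = u x t - u y t - ((L + 1) * t + K) * ‖x - y‖})
    (hσpos : 0 < σ) :
    ∃ β₀ > (0:ℝ), ∃ M > (0:ℝ), ∀ β, 0 < β → β < β₀ →
      ∃ α₀ > (0:ℝ), ∀ α, 0 < α → α < α₀ →
        ∃ xb yb : Fin n → ℝ, ∃ tb sb : ℝ,
          tb ∈ Set.Icc 0 T ∧ sb ∈ Set.Icc 0 T ∧
          (∀ x y : Fin n → ℝ, ∀ t ∈ Set.Icc 0 T, ∀ s ∈ Set.Icc 0 T,
            Phi u L K α β x y t s ≤ Phi u L K α β xb yb tb sb) ∧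
          σ / 2 < Phi u L K α β xb yb tb sb ∧
          |tb - sb| ≤ M * α ∧
          β * (‖xb‖ ^ 2 + ‖yb‖ ^ 2) ≤ M ∧
          xb ≠ yb ∧ 0 < tb ∧ 0 < sb := by
  classical
  obtain ⟨M₀, hM₀⟩ := hbdd
  have hM'1 : (1:ℝ) ≤ max M₀ 1 := le_max_right _ _
  set M' : ℝ := max M₀ 1 with hM'def
  have hM'pos : (0:ℝ) < M' := lt_of_lt_of_le one_pos hM'1
  have hMu : ∀ x t, |u x t| ≤ M' := fun x t => (hM₀ x t).trans (le_max_left _ _)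
  clear_value M'
  clear hM₀ hM'def
  -- reference point with value > 3σ/4
  have hSne : {v | ∃ x y : Fin n → ℝ, ∃ t ∈ Set.Icc 0 T,
      v = u x t - u y t - ((L + 1) * t + K) * ‖x - y‖}.Nonempty := by
    refine ⟨0, 0, 0, 0, ⟨le_refl 0, hT.le⟩, by simp⟩
  obtain ⟨v, hvmem, hv34⟩ :
      ∃ v ∈ {v | ∃ x y : Fin n → ℝ, ∃ t ∈ Set.Icc 0 T,
        v = u x t - u y t - ((L + 1) * t + K) * ‖x - y‖}, 3 * σ / 4 < v := by
    apply exists_lt_of_lt_csSup hSne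
    rw [← hσdef]; linarith
  obtain ⟨x₀, y₀, t₀, ht₀, hveq⟩ := hvmem
  set S₀ : ℝ := ‖x₀‖ ^ 2 + ‖y₀‖ ^ 2 with hS₀def
  have hS₀nn : (0:ℝ) ≤ S₀ := by positivity
  clear_value S₀
  set β₀ : ℝ := σ / (4 * (S₀ + 1)) with hβ₀def
  have hβ₀pos : 0 < β₀ := div_pos hσpos (by linarith)
  clear_value β₀
  set Mst : ℝ := 2 * M' + 1 with hMstdef
  have hMstpos : (0:ℝ) < Mst := by rw [hMstdef]; linarith
  clear_value Mst
  refine ⟨β₀, hβ₀pos, Mst, hMstpos, ?_⟩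
  intro β hβ hββ₀
  have hβS₀ : β * S₀ < σ / 4 := by
    have h1 : β * S₀ ≤ β₀ * S₀ := mul_le_mul_of_nonneg_right hββ₀.le hS₀nn
    have h2 : β₀ * S₀ < β₀ * (S₀ + 1) := (mul_lt_mul_iff_right₀ hβ₀pos).mpr (by linarith)
    have hne4 : S₀ + 1 ≠ 0 := ne_of_gt (by linarith)
    have h3 : β₀ * (S₀ + 1) = σ / 4 := by
      rw [hβ₀def, ← div_div, div_mul_cancel₀ _ hne4]
    linarith only [h1, h2, h3]
  -- uniform continuity modulus for ε = σ/4
  obtain ⟨δ, hδ, hδuc⟩ := Metric.uniformContinuousOn_iff.mp huc (σ / 4) (by linarith)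
  set α₀ : ℝ := δ / (Mst + 1) with hα₀def
  have hα₀pos : 0 < α₀ := div_pos hδ (by linarith)
  have hMα₀ : Mst * α₀ < δ := by
    have heq : α₀ * (Mst + 1) = δ := by
      rw [hα₀def]; exact div_mul_cancel₀ δ (ne_of_gt (by linarith))
    nlinarith [heq, hα₀pos]
  clear_value α₀
  have hucd : ∀ (x : Fin n → ℝ) (t s : ℝ), t ∈ Set.Icc 0 T → s ∈ Set.Icc 0 T →
      |t - s| < δ → |u x t - u x s| < σ / 4 := by
    intro x t s ht hs hd
    have h := hδuc (x, t) ⟨trivial, ht⟩ (x, s) ⟨trivial, hs⟩ ?_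
    · simpa [Real.dist_eq] using h
    · rw [Prod.dist_eq]
      simp only [dist_self, Real.dist_eq]
      rw [max_eq_right (abs_nonneg _)]
      exact hd
  clear hδuc
  refine ⟨α₀, hα₀pos, ?_⟩
  intro α hα hαα₀
  -- existence of a maximizer via compactness, on a large enough ball
  set R : ℝ := max (max ‖x₀‖ ‖y₀‖) (Real.sqrt (2 * M' / β)) with hRdef
  have hR0 : 0 ≤ R := le_trans (Real.sqrt_nonneg _) (le_max_right _ _)
  have hx₀R : ‖x₀‖ ≤ R := le_trans (le_max_left _ _) (le_max_left _ _)
  have hy₀R : ‖y₀‖ ≤ R := le_trans (le_max_right _ _) (le_max_left _ _)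
  have hsqrtR : Real.sqrt (2 * M' / β) ≤ R := le_max_right _ _
  clear_value R
  obtain ⟨xb, yb, tb, sb, hxbR, hybR, htb, hsb, hmax⟩ :=
    phi_exists_max u L K α β T R hT.le hR0 huc.continuousOn
  -- the reference value is > σ/2
  have hFref : σ / 2 < Phi u L K α β x₀ y₀ t₀ t₀ := by
    unfold Phi
    rw [sub_self, abs_zero]
    rw [show ((0:ℝ)^2 / α^2) = 0 by simp]
    rw [← hS₀def]
    linarith only [hveq ▸ hv34, hβS₀, hσpos]
  have hFb : σ / 2 < Phi u L K α β xb yb tb sb :=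
    lt_of_lt_of_le hFref (hmax x₀ y₀ t₀ t₀ hx₀R hy₀R ht₀ ht₀)
  -- global maximality
  have hglobal : ∀ x y : Fin n → ℝ, ∀ t ∈ Set.Icc (0:ℝ) T, ∀ s ∈ Set.Icc (0:ℝ) T,
      Phi u L K α β x y t s ≤ Phi u L K α β xb yb tb sb := by
    intro x y t ht s hs
    by_cases hin : ‖x‖ ≤ R ∧ ‖y‖ ≤ R
    · exact hmax x y t s hin.1 hin.2 ht hs
    · -- outside the ball: Phi ≤ 0 < σ/2 < Phi at the maximizer
      have hRsq : 2 * M' ≤ β * R ^ 2 := by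
        have h2 : 2 * M' / β ≤ R ^ 2 := by
          rw [← Real.sq_sqrt (show (0:ℝ) ≤ 2 * M' / β by
            apply div_nonneg _ hβ.le; linarith only [hM'pos])]
          exact pow_le_pow_left₀ (Real.sqrt_nonneg _) hsqrtR 2
        calc 2 * M' = β * (2 * M' / β) := by
              rw [mul_comm β (2 * M' / β), div_mul_cancel₀ _ (ne_of_gt hβ)]
          _ ≤ β * R ^ 2 := mul_le_mul_of_nonneg_left h2 hβ.le
      have houts : 2 * M' ≤ β * (‖x‖ ^ 2 + ‖y‖ ^ 2) := by
        have hxy : R ^ 2 ≤ ‖x‖ ^ 2 + ‖y‖ ^ 2 := by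
          rcases not_and_or.mp hin with h | h
          · push_neg at h
            have : R ^ 2 ≤ ‖x‖ ^ 2 := pow_le_pow_left₀ hR0 h.le 2
            linarith only [this, sq_nonneg ‖y‖]
          · push_neg at h
            have : R ^ 2 ≤ ‖y‖ ^ 2 := pow_le_pow_left₀ hR0 h.le 2
            linarith only [this, sq_nonneg ‖x‖]
        exact hRsq.trans (mul_le_mul_of_nonneg_left hxy hβ.le)
      have hC : 0 ≤ ((L + 1) * t + K) * ‖x - y‖ :=
        mul_nonneg (add_nonneg (mul_nonneg (by linarith only [hL]) ht.1) hK.le)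
          (norm_nonneg _)
      have hpen : 0 ≤ |t - s| ^ 2 / α ^ 2 := by positivity
      have h1 := hMu x t
      have h2 := hMu y s
      rw [abs_le] at h1 h2
      have hPhile : Phi u L K α β x y t s ≤ 0 := by
        unfold Phi
        linarith only [h1.2, h2.1, hC, hpen, houts]
      linarith only [hPhile, hFb, hσpos]
  -- basic bounds at the maximizer
  have hCb : 0 ≤ ((L + 1) * tb + K) * ‖xb - yb‖ :=
    mul_nonneg (add_nonneg (mul_nonneg (by linarith only [hL]) htb.1) hK.le)
      (norm_nonneg _)
  have hβqb : 0 ≤ β * (‖xb‖ ^ 2 + ‖yb‖ ^ 2) := mul_nonneg hβ.le (by positivity)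
  have hpenb : 0 ≤ |tb - sb| ^ 2 / α ^ 2 := by positivity
  have hub1 := hMu xb tb
  have hub2 := hMu yb sb
  rw [abs_le] at hub1 hub2
  have hFb' : σ / 2 < u xb tb - u yb sb - ((L + 1) * tb + K) * ‖xb - yb‖
      - |tb - sb| ^ 2 / α ^ 2 - β * (‖xb‖ ^ 2 + ‖yb‖ ^ 2) := hFb
  have hq_le : β * (‖xb‖ ^ 2 + ‖yb‖ ^ 2) ≤ Mst := by
    rw [hMstdef]
    linarith only [hFb', hub1.2, hub2.1, hCb, hpenb, hσpos]
  have hpen_le : |tb - sb| ^ 2 / α ^ 2 ≤ 2 * M' := by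
    linarith only [hFb', hub1.2, hub2.1, hCb, hβqb, hσpos]
  have hd2 : |tb - sb| ^ 2 ≤ 2 * M' * α ^ 2 := by
    have hα2 : (0:ℝ) < α ^ 2 := by positivity
    rw [div_le_iff₀ hα2] at hpen_le
    linarith only [hpen_le]
  have hts : |tb - sb| ≤ Mst * α := by
    rw [hMstdef]
    exact sq_bound_to_lin (abs_nonneg _) hM'1 hα hd2
  have hts_lt : |tb - sb| < δ := by
    have h1 : Mst * α < Mst * α₀ := (mul_lt_mul_iff_right₀ hMstpos).mpr hαα₀
    linarith only [h1, hMα₀, hts]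
  -- xb ≠ yb
  have hne : xb ≠ yb := by
    intro heq
    have hbound : Phi u L K α β xb yb tb sb ≤ u xb tb - u xb sb := by
      unfold Phi
      rw [heq, sub_self, norm_zero, mul_zero]
      linarith only [hpenb, show (0:ℝ) ≤ β * (‖yb‖ ^ 2 + ‖yb‖ ^ 2) from
        mul_nonneg hβ.le (by positivity)]
    have huc1 := hucd xb tb sb htb hsb hts_lt
    rw [abs_lt] at huc1
    linarith only [hbound, huc1.2, hFb, hσpos]
  -- Lipschitz bound at time 0
  have hlip : ∀ x y : Fin n → ℝ, |u x 0 - u y 0| ≤ K * ‖x - y‖ := by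
    intro x y
    have h := hLip0.dist_le_mul x y
    rw [Real.dist_eq, dist_eq_norm] at h
    calc |u x 0 - u y 0| ≤ (Real.toNNReal K : ℝ) * ‖x - y‖ := h
      _ = K * ‖x - y‖ := by rw [Real.coe_toNNReal K hK.le]
  have h0Icc : (0:ℝ) ∈ Set.Icc (0:ℝ) T := ⟨le_refl 0, hT.le⟩
  -- tb > 0
  have htbpos : 0 < tb := by
    by_contra h
    push_neg at h
    have htb0 : tb = 0 := le_antisymm h htb.1
    have hbound : Phi u L K α β xb yb tb sb ≤ u xb 0 - u yb sb - K * ‖xb - yb‖ := by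
      unfold Phi
      rw [htb0]
      rw [show ((L + 1) * 0 + K) = K by ring]
      linarith only [hβqb, show (0:ℝ) ≤ |0 - sb| ^ 2 / α ^ 2 by positivity]
    have hlipb := hlip xb yb
    rw [abs_le] at hlipb
    have huc1 := hucd yb 0 sb h0Icc hsb (by rw [← htb0]; exact hts_lt)
    rw [abs_lt] at huc1
    linarith only [hFb, hbound, huc1.2, hlipb.2, hσpos]
  -- sb > 0
  have hsbpos : 0 < sb := by
    by_contra h
    push_neg at h
    have hsb0 : sb = 0 := le_antisymm h hsb.1
    have hCge : K * ‖xb - yb‖ ≤ ((L + 1) * tb + K) * ‖xb - yb‖ := by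
      apply mul_le_mul_of_nonneg_right _ (norm_nonneg _)
      have h1 : 0 ≤ (L + 1) * tb := mul_nonneg (by linarith only [hL]) htb.1
      linarith only [h1]
    have hbound : Phi u L K α β xb yb tb sb ≤ u xb tb - u yb 0 - K * ‖xb - yb‖ := by
      unfold Phi
      rw [hsb0]
      linarith only [hCge, hβqb, show (0:ℝ) ≤ |tb - 0| ^ 2 / α ^ 2 by positivity]
    have hlipb := hlip xb yb
    rw [abs_le] at hlipb
    have huc1 := hucd xb tb 0 htb h0Icc (by rw [← hsb0]; exact hts_lt)
    rw [abs_lt] at huc1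
    linarith only [hFb, hbound, huc1.2, hlipb.2, hσpos]
  exact ⟨xb, yb, tb, sb, htb, hsb, hglobal, hFb, hts, hq_le, hne, htbpos, hsbpos⟩
end
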